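/- Suppose there is no node of the network which is influential both to node i and to node j (i.e., no k ∈ Fin M such that k is influential to i and k is influential to j). Then the discrete Bass realization satisfies the exact product formula ∫ G_i(ω) G_j(ω) dμ(ω) = (∫ G_i(ω) dμ(ω)) · (∫ G_j(ω) dμ(ω)), where the integrals are over the cube [0,1]^{N×M} with the uniform probability measure μ. (This is the discrete-time form of the equality [S_{i,j}](t) = [S_i](t)·[S_j](t) when i and j have no common influential node.) -/
import Mathlib


open MeasureTheory

/-- Discrete Bass realization: adoption state of node `j` after `n` time steps,
for the realization `ω : Fin N → Fin M → ℝ` of the uniform variables. -/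
noncomputable def bassX (M N : ℕ) (dt : ℝ) (p : Fin M → ℝ) (q : Fin M → Fin M → ℝ)
    (ω : Fin N → Fin M → ℝ) : ℕ → Fin M → Bool
  | 0, _ => false
  | n + 1, j =>
    if h : n < N then
      bassX M N dt p q ω n j ||
        (if ω ⟨n, h⟩ j ≤
            (p j + ∑ k, q k j * (if bassX M N dt p q ω n k = true then (1 : ℝ) else 0)) * dt
          then true else false)
    else
      bassX M N dt p q ω n j

/-- Nonadoption indicator of node `i` after `N` steps. -/
noncomputable def bassG (M N : ℕ) (dt : ℝ) (p : Fin M → ℝ) (q : Fin M → Fin M → ℝ)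
    (i : Fin M) (ω : Fin N → Fin M → ℝ) : ℝ :=
  if bassX M N dt p q ω N i = false then 1 else 0

/-- Uniform probability measure on the cube `[0,1]^{N×M}`. -/
noncomputable def cubeMeasure (N M : ℕ) : Measure (Fin N → Fin M → ℝ) :=
  Measure.pi fun _ => Measure.pi fun _ => volume.restrict (Set.Icc (0 : ℝ) 1)


/-- `k` is influential to `i`: `k = i`, or there is a finite directed path of
positive-weight edges from `k` to `i`. -/
def influential (M : ℕ) (q : Fin M → Fin M → ℝ) (k i : Fin M) : Prop :=
  Relation.ReflTransGen (fun a b => 0 < q a b) k i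

/-- Locality: the adoption state of an influential-to-`i` node depends only on the
coordinates of `ω` in columns influential to `i`. -/
lemma bassX_local (M N : ℕ) (dt : ℝ) (p : Fin M → ℝ) (q : Fin M → Fin M → ℝ)
    (hq : ∀ k j, 0 ≤ q k j) (i : Fin M) (ω ω' : Fin N → Fin M → ℝ)
    (h : ∀ n m, influential M q m i → ω n m = ω' n m) :
    ∀ n m, influential M q m i →
      bassX M N dt p q ω n m = bassX M N dt p q ω' n m := by
  intro n
  induction n with
  | zero => intro m _; rfl
  | succ n ih =>
    intro m hm
    have hsum : (∑ k, q k m * (if bassX M N dt p q ω n k = true then (1 : ℝ) else 0)) =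
        ∑ k, q k m * (if bassX M N dt p q ω' n k = true then (1 : ℝ) else 0) := by
      refine Finset.sum_congr rfl fun k _ => ?_
      rcases eq_or_lt_of_le (hq k m) with h0 | hpos
      · rw [← h0]; ring
      · have hk : influential M q k i := Relation.ReflTransGen.head hpos hm
        rw [ih k hk]
    by_cases hn : n < N
    · simp only [bassX, dif_pos hn, ih m hm, h ⟨n, hn⟩ m hm, hsum]
    · simp only [bassX, dif_neg hn, ih m hm]

instance : IsProbabilityMeasure (volume.restrict (Set.Icc (0 : ℝ) 1)) :=
  ⟨by simp⟩

/-- If no node is influential both to `i` and to `j`, then the joint nonadoption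
probability factorizes exactly: `[S_{i,j}] = [S_i]·[S_j]` in discrete time. -/
theorem bass_nonadoption_product_equality
    (M N : ℕ) (hM : 1 ≤ M) (hN : 1 ≤ N) (dt : ℝ) (hdt : 0 < dt)
    (p : Fin M → ℝ) (hp : ∀ j, 0 ≤ p j)
    (q : Fin M → Fin M → ℝ) (hq : ∀ k j, 0 ≤ q k j) (hqdiag : ∀ j, q j j = 0)
    (i j : Fin M)
    (hno_common : ¬ ∃ k : Fin M, influential M q k i ∧ influential M q k j) :
    ∫ ω, bassG M N dt p q i ω * bassG M N dt p q j ω ∂(cubeMeasure N M) =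
      (∫ ω, bassG M N dt p q i ω ∂(cubeMeasure N M)) *
        (∫ ω, bassG M N dt p q j ω ∂(cubeMeasure N M)) := by
  classical
  set P : Fin M → Prop := fun m => influential M q m i with hP
  set μ0 : Measure ℝ := volume.restrict (Set.Icc (0 : ℝ) 1) with hμ0
  set μ1 : Measure ({m // P m} → ℝ) := Measure.pi fun _ => μ0 with hμ1
  set μ2 : Measure ({m // ¬ P m} → ℝ) := Measure.pi fun _ => μ0 with hμ2
  set ν1 : Measure (Fin N → {m // P m} → ℝ) := Measure.pi fun _ => μ1 with hν1
  set ν2 : Measure (Fin N → {m // ¬ P m} → ℝ) := Measure.pi fun _ => μ2 with hν2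
  -- the measurable equivalence splitting coordinates
  let e1 : (Fin M → ℝ) ≃ᵐ ({m // P m} → ℝ) × ({m // ¬ P m} → ℝ) :=
    MeasurableEquiv.piEquivPiSubtypeProd (fun _ : Fin M => ℝ) P
  let eN : (Fin N → Fin M → ℝ) ≃ᵐ (Fin N → ({m // P m} → ℝ) × ({m // ¬ P m} → ℝ)) :=
    MeasurableEquiv.piCongrRight fun _ => e1
  let e2 : (Fin N → ({m // P m} → ℝ) × ({m // ¬ P m} → ℝ)) ≃ᵐ
      (Fin N → {m // P m} → ℝ) × (Fin N → {m // ¬ P m} → ℝ) :=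
    MeasurableEquiv.arrowProdEquivProdArrow _ _ _
  let Φ : (Fin N → Fin M → ℝ) ≃ᵐ
      (Fin N → {m // P m} → ℝ) × (Fin N → {m // ¬ P m} → ℝ) := eN.trans e2
  have hmp1 : MeasurePreserving eN (cubeMeasure N M)
      (Measure.pi fun _ : Fin N => μ1.prod μ2) := by
    exact measurePreserving_pi _ _
      (fun n => measurePreserving_piEquivPiSubtypeProd (fun _ : Fin M => μ0) P)
  have hmp2 : MeasurePreserving e2 (Measure.pi fun _ : Fin N => μ1.prod μ2) (ν1.prod ν2) :=
    measurePreserving_arrowProdEquivProdArrow _ _ _ (fun _ => μ1) (fun _ => μ2)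
  have hmp : MeasurePreserving Φ (cubeMeasure N M) (ν1.prod ν2) := hmp2.comp hmp1
  -- the factor functions
  let F : (Fin N → {m // P m} → ℝ) → ℝ := fun x =>
    bassG M N dt p q i (fun n m => if h : P m then x n ⟨m, h⟩ else 0)
  let G : (Fin N → {m // ¬ P m} → ℝ) → ℝ := fun x =>
    bassG M N dt p q j (fun n m => if h : ¬ P m then x n ⟨m, h⟩ else 0)
  have hF : ∀ ω, bassG M N dt p q i ω = F ((Φ ω).1) := by
    intro ω
    have key : bassX M N dt p q ω N i = bassX M N dt p q
        (fun n m => if h : P m then (Φ ω).1 n ⟨m, h⟩ else 0) N i := by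
      refine bassX_local M N dt p q hq i _ _ ?_ N i Relation.ReflTransGen.refl
      intro n m hm
      simp only [dif_pos (show P m from hm)]
      rfl
    simp only [F, bassG, key]
  have hG : ∀ ω, bassG M N dt p q j ω = G ((Φ ω).2) := by
    intro ω
    have key : bassX M N dt p q ω N j = bassX M N dt p q
        (fun n m => if h : ¬ P m then (Φ ω).2 n ⟨m, h⟩ else 0) N j := by
      refine bassX_local M N dt p q hq j _ _ ?_ N j Relation.ReflTransGen.refl
      intro n m hm
      have hmP : ¬ P m := fun hPm => hno_common ⟨m, hPm, hm⟩
      simp only [dif_pos hmP]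
      rfl
    simp only [G, bassG, key]
  have hA : ∫ ω, bassG M N dt p q i ω * bassG M N dt p q j ω ∂(cubeMeasure N M) =
      (∫ x, F x ∂ν1) * ∫ y, G y ∂ν2 := by
    rw [← integral_prod_mul F G, ← hmp.integral_comp' (fun z => F z.1 * G z.2)]
    simp only [hF, hG]
  have hB : ∫ ω, bassG M N dt p q i ω ∂(cubeMeasure N M) = ∫ x, F x ∂ν1 := by
    have : IsProbabilityMeasure ν2 := by
      rw [hν2]; infer_instance
    have h1 : ∫ _y, (1 : ℝ) ∂ν2 = 1 := by simp
    rw [← mul_one (∫ x, F x ∂ν1), ← h1,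
      ← integral_prod_mul F (fun _ => (1 : ℝ)),
      ← hmp.integral_comp' (fun z => F z.1 * (1 : ℝ))]
    simp only [hF, mul_one]
  have hC : ∫ ω, bassG M N dt p q j ω ∂(cubeMeasure N M) = ∫ y, G y ∂ν2 := by
    have : IsProbabilityMeasure ν1 := by
      rw [hν1]; infer_instance
    have h1 : ∫ _x, (1 : ℝ) ∂ν1 = 1 := by simp
    rw [← one_mul (∫ y, G y ∂ν2), ← h1,
      ← integral_prod_mul (fun _ => (1 : ℝ)) G,
      ← hmp.integral_comp' (fun z => (1 : ℝ) * G z.2)]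
    simp only [hG, one_mul]
  rw [hA, hB, hC]
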